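/- Let n ≥ 2 be an integer, b ∈ ℝ, and set c = −(n−1)·b/n². Define H(x,y) = (x²·(1 + c·x^(n−1))² + y²) / ((n−1)²·(n−1 + n·c·x^(n−1))^(2n/(n−1))) on the open set U = {(x,y) ∈ ℝ² : n−1 + n·c·x^(n−1) > 0}. Then for every (x,y) ∈ U, (−y + (b/n)·x^(n−1)·y)·∂H/∂x + (x + b·x^(n−2)·y² − ((n−1)·b/n²)·x^n)·∂H/∂y = 0, i.e. H is a first integral of the system ẋ = −y + (b/n)·x^(n−1)·y, ẏ = x + b·x^(n−2)·y² − ((n−1)·b/n²)·x^n. -/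

import Mathlib

/-- With `c = −(n−1)b/n²`, the function
`H(x,y) = (x²(1 + c x^(n−1))² + y²)/((n−1)²(n−1 + n c x^(n−1))^(2n/(n−1)))`
is a first integral of the system
`ẋ = −y + (b/n) x^(n−1) y, ẏ = x + b x^(n−2) y² − ((n−1)b/n²) xⁿ`
on the set where `n−1 + n c x^(n−1) > 0`. -/
theorem stmt_3 (n : ℕ) (hn : 2 ≤ n) (b c : ℝ)
    (hc : c = -(((n : ℝ) - 1) * b) / (n : ℝ) ^ 2) (x y : ℝ)
    (hxy : (n : ℝ) - 1 + (n : ℝ) * c * x ^ (n - 1) > 0) :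
    (-y + (b / (n : ℝ)) * x ^ (n - 1) * y) *
        deriv (fun t : ℝ =>
          (t ^ 2 * (1 + c * t ^ (n - 1)) ^ 2 + y ^ 2) /
            (((n : ℝ) - 1) ^ 2 *
              ((n : ℝ) - 1 + (n : ℝ) * c * t ^ (n - 1)) ^ (2 * (n : ℝ) / ((n : ℝ) - 1)))) x
      + (x + b * x ^ (n - 2) * y ^ 2 - (((n : ℝ) - 1) * b / (n : ℝ) ^ 2) * x ^ n) *
        deriv (fun t : ℝ =>
          (x ^ 2 * (1 + c * x ^ (n - 1)) ^ 2 + t ^ 2) /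
            (((n : ℝ) - 1) ^ 2 *
              ((n : ℝ) - 1 + (n : ℝ) * c * x ^ (n - 1)) ^ (2 * (n : ℝ) / ((n : ℝ) - 1)))) y
      = 0 := by
  obtain ⟨k, rfl⟩ : ∃ k, n = k + 2 := ⟨n - 2, by omega⟩
  simp only [show k + 2 - 1 = k + 1 from rfl, show k + 2 - 2 = k from rfl] at *
  push_cast at hxy ⊢
  set α : ℝ := 2 * ((k:ℝ) + 2) / ((k:ℝ) + 2 - 1) with hα
  set gx : ℝ := (k:ℝ) + 2 - 1 + ((k:ℝ) + 2) * c * x ^ (k + 1) with hgx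
  have hg0 : gx ≠ 0 := hxy.ne'
  -- derivative of g
  have hg : HasDerivAt (fun t : ℝ => (k:ℝ) + 2 - 1 + ((k:ℝ) + 2) * c * t ^ (k + 1))
      (((k:ℝ) + 2) * c * (((k:ℝ) + 1) * x ^ k)) x := by
    have := ((hasDerivAt_pow (k + 1) x).const_mul (((k:ℝ) + 2) * c)).const_add ((k:ℝ) + 2 - 1)
    refine this.congr_deriv ?_
    push_cast
    ring
  have hD : HasDerivAt (fun t : ℝ => ((k:ℝ) + 2 - 1) ^ 2 *
      ((k:ℝ) + 2 - 1 + ((k:ℝ) + 2) * c * t ^ (k + 1)) ^ α)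
      (((k:ℝ) + 2 - 1) ^ 2 * (α * gx ^ (α - 1) * (((k:ℝ) + 2) * c * (((k:ℝ) + 1) * x ^ k)))) x := by
    have := (hg.rpow_const (p := α) (Or.inl hg0)).const_mul (((k:ℝ) + 2 - 1) ^ 2)
    refine this.congr_deriv ?_
    ring
  have hN : HasDerivAt (fun t : ℝ => t ^ 2 * (1 + c * t ^ (k + 1)) ^ 2 + y ^ 2)
      ((2 * x) * (1 + c * x ^ (k + 1)) ^ 2
        + x ^ 2 * (2 * (1 + c * x ^ (k + 1)) * (c * (((k:ℝ) + 1) * x ^ k)))) x := by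
    have h1 : HasDerivAt (fun t : ℝ => 1 + c * t ^ (k + 1)) (c * (((k:ℝ) + 1) * x ^ k)) x := by
      have := ((hasDerivAt_pow (k + 1) x).const_mul c).const_add 1
      refine this.congr_deriv ?_; push_cast; ring
    have h2 := h1.pow 2
    have h3 := (hasDerivAt_pow 2 x).mul h2
    have := h3.add_const (y ^ 2)
    refine this.congr_deriv ?_
    simp only [Pi.pow_apply]
    push_cast
    ring
  have hk0 : (0:ℝ) < (k:ℝ) + 2 - 1 := by
    have := Nat.cast_nonneg (α := ℝ) k
    linarith
  have hDx : ((k:ℝ) + 2 - 1) ^ 2 * gx ^ α ≠ 0 :=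
    (mul_pos (pow_pos hk0 2) (Real.rpow_pos_of_pos hxy α)).ne'
  have d1 := ((hN.div hD hDx).deriv)
  have hD2 : HasDerivAt (fun t : ℝ => (x ^ 2 * (1 + c * x ^ (k + 1)) ^ 2 + t ^ 2) /
      (((k:ℝ) + 2 - 1) ^ 2 * gx ^ α)) (2 * y / (((k:ℝ) + 2 - 1) ^ 2 * gx ^ α)) y := by
    have := ((hasDerivAt_pow 2 y).const_add (x ^ 2 * (1 + c * x ^ (k + 1)) ^ 2)).div_const
      (((k:ℝ) + 2 - 1) ^ 2 * gx ^ α)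
    refine this.congr_deriv ?_; push_cast; ring
  rw [show (fun t : ℝ => (t ^ 2 * (1 + c * t ^ (k + 1)) ^ 2 + y ^ 2) /
            (((k:ℝ) + 2 - 1) ^ 2 *
              ((k:ℝ) + 2 - 1 + ((k:ℝ) + 2) * c * t ^ (k + 1)) ^ α)) =
     ((fun t : ℝ => t ^ 2 * (1 + c * t ^ (k + 1)) ^ 2 + y ^ 2) /
        (fun t : ℝ => ((k:ℝ) + 2 - 1) ^ 2 *
          ((k:ℝ) + 2 - 1 + ((k:ℝ) + 2) * c * t ^ (k + 1)) ^ α)) from rfl, d1, hD2.deriv]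
  -- now algebra
  have hA : gx ^ α = gx ^ (α - 1) * gx := by
    rw [← Real.rpow_add_one hg0 (α - 1)]; ring_nf
  set A : ℝ := gx ^ (α - 1) with hAdef
  have hApos : 0 < A := Real.rpow_pos_of_pos hxy _
  have hk1 : ((k:ℝ) + 2 - 1) ≠ 0 := hk0.ne'
  have hn0 : ((k:ℝ) + 2) ≠ 0 := by positivity
  have hn0' : ((k:ℝ) + 2) ^ 2 ≠ 0 := pow_ne_zero _ hn0
  have hb : b = -((((k:ℝ) + 2) ^ 2) * c) / ((k:ℝ) + 2 - 1) := by
    rw [hc]; push_cast; field_simp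
  rw [hA, hα, hgx, hb]
  field_simp
  ring
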